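/- For all integers k ≥ 2 and n ≥ 9, k(k-1) · n^{1-k} · Σ_{r=3}^{⌈n/2⌉-2} (r-2)^{k-2} ≥ k · (1/2 - 4/n)^{k-1}. -/

import Mathlib

open Finset

lemma pow_succ_le_sum_pow (p : ℕ) (M : ℕ) :
    (M : ℝ) ^ (p + 1) ≤ ((p : ℝ) + 1) * ∑ j ∈ Finset.Icc 1 M, (j : ℝ) ^ p := by
  induction M with
  | zero => simp
  | succ M ih =>
    rw [Finset.sum_Icc_succ_top (by omega)]
    have hstep : ((M : ℝ) + 1) ^ (p + 1) - (M : ℝ) ^ (p + 1)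
        ≤ ((p : ℝ) + 1) * ((M : ℝ) + 1) ^ p := by
      have h := geom_sum₂_mul ((M : ℝ) + 1) (M : ℝ) (p + 1)
      have hxy : ((M : ℝ) + 1) - (M : ℝ) = 1 := by ring
      rw [hxy, mul_one] at h
      rw [← h]
      have hb : ∀ i ∈ Finset.range (p + 1),
          ((M : ℝ) + 1) ^ i * (M : ℝ) ^ (p + 1 - 1 - i) ≤ ((M : ℝ) + 1) ^ p := by
        intro i hi
        simp only [Finset.mem_range] at hi
        have h1 : ((M : ℝ) + 1) ^ i * (M : ℝ) ^ (p + 1 - 1 - i)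
            ≤ ((M : ℝ) + 1) ^ i * ((M : ℝ) + 1) ^ (p + 1 - 1 - i) := by
          have hM0 : (0:ℝ) ≤ (M:ℝ) := Nat.cast_nonneg M
          have := pow_le_pow_left₀ hM0 (show (M:ℝ) ≤ (M:ℝ)+1 by linarith) (p + 1 - 1 - i)
          have hpos : (0:ℝ) ≤ ((M:ℝ)+1)^i := by positivity
          nlinarith
        refine h1.trans_eq ?_
        rw [← pow_add]
        congr 1
        omega
      calc ∑ i ∈ Finset.range (p + 1), ((M : ℝ) + 1) ^ i * (M : ℝ) ^ (p + 1 - 1 - i)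
          ≤ ∑ _i ∈ Finset.range (p + 1), ((M : ℝ) + 1) ^ p := Finset.sum_le_sum hb
        _ = ((p : ℝ) + 1) * ((M : ℝ) + 1) ^ p := by
            rw [Finset.sum_const, Finset.card_range, nsmul_eq_mul]; push_cast; ring
    push_cast
    nlinarith [ih]

/-- For integers `k ≥ 2`, `n ≥ 9`,
`k(k-1) n^{1-k} Σ_{r=3}^{⌈n/2⌉-2} (r-2)^{k-2} ≥ k (1/2 - 4/n)^{k-1}`. -/
theorem stmt_3 (k n : ℕ) (hk : 2 ≤ k) (hn : 9 ≤ n) :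
    (k : ℝ) * ((k : ℝ) - 1) * ((n : ℝ) ^ (k - 1))⁻¹ *
        ∑ r ∈ Finset.Icc 3 ((n + 1) / 2 - 2), ((r : ℝ) - 2) ^ (k - 2)
      ≥ (k : ℝ) * (1 / 2 - 4 / (n : ℝ)) ^ (k - 1) := by
  obtain ⟨p, rfl⟩ : ∃ p, k = p + 2 := ⟨k - 2, by omega⟩
  set m : ℕ := (n + 1) / 2 - 2 with hm
  have hm3 : 3 ≤ m := by omega
  set M : ℕ := m - 2 with hM
  have hM1 : 1 ≤ M := by omega
  -- reindex the sum
  have hsum : ∑ r ∈ Finset.Icc 3 m, ((r : ℝ) - 2) ^ (p + 2 - 2)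
      = ∑ j ∈ Finset.Icc 1 M, (j : ℝ) ^ p := by
    have hicc : Finset.Icc 3 m = (Finset.Icc 1 M).map (addRightEmbedding 2) := by
      rw [Finset.map_add_right_Icc]
      congr 1
      omega
    rw [hicc, Finset.sum_map]
    apply Finset.sum_congr rfl
    intro j _
    simp only [addRightEmbedding_apply]
    push_cast
    ring_nf
  rw [hsum]
  have hn0 : (0 : ℝ) < n := by positivity
  have hnpow : (0 : ℝ) < (n : ℝ) ^ (p + 2 - 1) := by positivity
  rw [ge_iff_le, ← sub_nonneg]
  have key : ((p : ℝ) + 1) * ∑ j ∈ Finset.Icc 1 M, (j : ℝ) ^ p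
      ≥ (1 / 2 - 4 / (n : ℝ)) ^ (p + 1) * (n : ℝ) ^ (p + 1) := by
    have h1 : (1 / 2 - 4 / (n : ℝ)) ^ (p + 1) * (n : ℝ) ^ (p + 1)
        = ((n : ℝ) / 2 - 4) ^ (p + 1) := by
      rw [← mul_pow]
      congr 1
      field_simp
    rw [h1]
    have h2 : ((n : ℝ) / 2 - 4) ^ (p + 1) ≤ (M : ℝ) ^ (p + 1) := by
      apply pow_le_pow_left₀ (by linarith [(show (9:ℝ) ≤ n by exact_mod_cast hn)])
      have : n ≤ 2 * M + 8 := by omega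
      have := (show ((n:ℝ)) ≤ 2 * M + 8 by exact_mod_cast this)
      linarith
    exact le_trans h2 (pow_succ_le_sum_pow p M)
  have hS : (0 : ℝ) ≤ ∑ j ∈ Finset.Icc 1 M, (j : ℝ) ^ p := by positivity
  have hexp1 : p + 2 - 1 = p + 1 := by omega
  rw [hexp1]
  have hcast : ((p : ℝ) + 2) - 1 = (p : ℝ) + 1 := by ring
  push_cast
  rw [hcast]
  have hne : ((n : ℝ) ^ (p + 1)) ≠ 0 := by positivity
  rw [show ((p:ℝ)+2) * ((p:ℝ)+1) * ((n:ℝ)^(p+1))⁻¹ * (∑ j ∈ Finset.Icc 1 M, (j:ℝ)^p)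
      - ((p:ℝ)+2) * (1/2 - 4/(n:ℝ))^(p+1)
      = (((p:ℝ)+2) * (((p:ℝ)+1) * (∑ j ∈ Finset.Icc 1 M, (j:ℝ)^p)
          - (1/2 - 4/(n:ℝ))^(p+1) * (n:ℝ)^(p+1))) * ((n:ℝ)^(p+1))⁻¹ by
    field_simp]
  apply mul_nonneg
  · apply mul_nonneg (by positivity)
    linarith [key]
  · positivity
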